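/- arXiv:2605.08900 — 2 statements merged into one kernel-verified Lean document; each statement's English description precedes it below -/
import Mathlib

section
/- Let X be a T₀ space and 𝒦 an irreducible subset of the Smyth power space P_S(X). If B is a closed subset of X intersecting every element of 𝒦, then {↑(K ∩ B) : K ∈ 𝒦} is an irreducible subset of P_S(X). -/
open Set

/-- Specialization order: `x ≤ y` iff `x ∈ cl {y}`. -/
def specLE {X : Type} [TopologicalSpace X] (x y : X) : Prop := x ∈ closure {y}

/-- Upward closure w.r.t. the specialization order. -/
def upClosure {X : Type} [TopologicalSpace X] (A : Set X) : Set X :=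
  {y | ∃ a ∈ A, specLE a y}

/-- The underlying set of the Smyth power space: nonempty compact saturated subsets. -/
def SmythPS (X : Type) [TopologicalSpace X] : Type :=
  {K : Set X // K.Nonempty ∧ IsCompact K ∧ ∀ x ∈ K, ∀ y, specLE x y → y ∈ K}

/-- `□U = {K ∈ Q(X) : K ⊆ U}`. -/
def boxU {X : Type} [TopologicalSpace X] (U : Set X) : Set (SmythPS X) :=
  {K : SmythPS X | K.1 ⊆ U}

/-- The upper Vietoris topology on the Smyth power space. -/
instance smythTop (X : Type) [TopologicalSpace X] : TopologicalSpace (SmythPS X) :=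
  TopologicalSpace.generateFrom {S : Set (SmythPS X) | ∃ U : Set X, IsOpen U ∧ S = boxU U}

/-- The cut `A^δ = (A^↑)^↓` w.r.t. the specialization order. -/
def cutD {X : Type} [TopologicalSpace X] (A : Set X) : Set X :=
  {x | ∀ u : X, (∀ a ∈ A, specLE a u) → specLE x u}

/-- `U` is SI₂-open. -/
def SI2Open {X : Type} [TopologicalSpace X] (U : Set X) : Prop :=
  IsOpen U ∧ ∀ F : Set X, IsIrreducible F → (cutD F ∩ U).Nonempty → (F ∩ U).Nonempty

/-- `le` makes `I` the index of a net: nonempty, reflexive, transitive, directed. -/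
def IsNetOrder {I : Type} (le : I → I → Prop) : Prop :=
  Nonempty I ∧ (∀ i, le i i) ∧ (∀ i j k, le i j → le j k → le i k) ∧
    (∀ i j, ∃ k, le i k ∧ le j k)

/-- GSI₂-convergence of the net `xi` (indexed by `(I, le)`) to `x`. -/
def GSI2Conv {X : Type} [TopologicalSpace X] {I : Type} (le : I → I → Prop)
    (xi : I → X) (x : X) : Prop :=
  ∃ 𝒢 : Set (Set X), (∀ G ∈ 𝒢, G.Finite ∧ G.Nonempty) ∧
    IsIrreducible {K : SmythPS X | ∃ G ∈ 𝒢, K.1 = upClosure G} ∧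
    (∀ U : Set X, IsOpen U → (∃ G ∈ 𝒢, upClosure G ⊆ U) →
      ∃ i₀, ∀ i, le i₀ i → xi i ∈ U) ∧
    (⋂ G ∈ 𝒢, upClosure G) ⊆ upClosure {x}

/-- `A ≪_{I₂} B`. -/
def WayBelowI2 {X : Type} [TopologicalSpace X] (A B : Set X) : Prop :=
  ∀ D : Set X, IsIrreducible D → (cutD D ∩ B).Nonempty → (A ∩ closure D).Nonempty

/-- `w(x) = {↑F : F nonempty finite, F ≪_{I₂} x}` as a subset of the Smyth power space. -/
def wPS {X : Type} [TopologicalSpace X] (x : X) : Set (SmythPS X) :=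
  {K : SmythPS X | ∃ F : Set X, F.Finite ∧ F.Nonempty ∧ WayBelowI2 F {x} ∧ K.1 = upClosure F}

/-- QI₂-continuity. -/
def QI2Continuous (X : Type) [TopologicalSpace X] : Prop :=
  ∀ x : X, IsIrreducible (wPS x) ∧ upClosure {x} = ⋂ K ∈ wPS x, (K.1 : Set X)

/-- Strong QI₂-continuity. -/
def StronglyQI2Continuous (X : Type) [TopologicalSpace X] : Prop :=
  QI2Continuous X ∧
  ∀ (F : Set X) (x : X) (U : Set X), F.Finite → F.Nonempty → WayBelowI2 F {x} →
    IsOpen U → F ⊆ U → ∃ W : Set X, SI2Open W ∧ x ∈ W ∧ W ⊆ U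

lemma specLE_refl' {X : Type} [TopologicalSpace X] (x : X) : specLE x x :=
  subset_closure rfl

lemma specLE_trans' {X : Type} [TopologicalSpace X] {x y z : X}
    (h1 : specLE x y) (h2 : specLE y z) : specLE x z := by
  have : closure {y} ⊆ closure {z} := by
    have : ({y} : Set X) ⊆ closure {z} := Set.singleton_subset_iff.mpr h2
    simpa using closure_minimal this isClosed_closure
  exact this h1

lemma open_upclosed' {X : Type} [TopologicalSpace X] {U : Set X} (hU : IsOpen U)
    {x y : X} (hx : x ∈ U) (h : specLE x y) : y ∈ U := by
  rcases mem_closure_iff.mp h U hU hx with ⟨z, hzU, hz⟩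
  rcases hz with rfl
  exact hzU

lemma subset_upClosure' {X : Type} [TopologicalSpace X] (A : Set X) : A ⊆ upClosure A :=
  fun x hx => ⟨x, hx, specLE_refl' x⟩

lemma upClosure_subset_open' {X : Type} [TopologicalSpace X] {A U : Set X} (hU : IsOpen U)
    (h : A ⊆ U) : upClosure A ⊆ U := by
  rintro y ⟨a, ha, hay⟩
  exact open_upclosed' hU (h ha) hay

lemma isCompact_upClosure' {X : Type} [TopologicalSpace X] {A : Set X} (hA : IsCompact A) :
    IsCompact (upClosure A) := by
  apply isCompact_of_finite_subcover
  intro ι U hU hcov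
  obtain ⟨t, ht⟩ := hA.elim_finite_subcover U hU ((subset_upClosure' A).trans hcov)
  exact ⟨t, upClosure_subset_open' (isOpen_biUnion fun i _ => hU i) ht⟩

/-- The element `↑(K ∩ B)` of the Smyth power space. -/
def elemL {X : Type} [TopologicalSpace X] (K : SmythPS X) (B : Set X) (hB : IsClosed B)
    (hne : (K.1 ∩ B).Nonempty) : SmythPS X :=
  ⟨upClosure (K.1 ∩ B), hne.mono (subset_upClosure' _),
    isCompact_upClosure' (K.2.2.1.inter_right hB),
    fun x hx y hxy => by
      rcases hx with ⟨a, ha, hax⟩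
      exact ⟨a, ha, specLE_trans' hax hxy⟩⟩

lemma boxU_isOpen {X : Type} [TopologicalSpace X] {U : Set X} (hU : IsOpen U) :
    IsOpen (boxU U) :=
  TopologicalSpace.isOpen_generateFrom_of_mem ⟨U, hU, rfl⟩

lemma boxBasis (X : Type) [TopologicalSpace X] :
    TopologicalSpace.IsTopologicalBasis
      {S : Set (SmythPS X) | ∃ U : Set X, IsOpen U ∧ S = boxU U} := by
  refine ⟨?_, ?_, rfl⟩
  · rintro S1 ⟨U, hU, rfl⟩ S2 ⟨V, hV, rfl⟩ K hK
    exact ⟨boxU (U ∩ V), ⟨U ∩ V, hU.inter hV, rfl⟩,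
      fun x hx => ⟨hK.1 hx, hK.2 hx⟩,
      fun L hL => ⟨fun x hx => (hL hx).1, fun x hx => (hL hx).2⟩⟩
  · apply Set.eq_univ_of_forall
    intro K
    exact ⟨boxU Set.univ, ⟨Set.univ, isOpen_univ, rfl⟩, fun x _ => trivial⟩

theorem stmt8 {X : Type} [TopologicalSpace X] [T0Space X] (𝒦 : Set (SmythPS X))
    (h𝒦 : IsIrreducible 𝒦) (B : Set X) (hB : IsClosed B)
    (hmeet : ∀ K ∈ 𝒦, (K.1 ∩ B).Nonempty) :
    IsIrreducible {L : SmythPS X | ∃ K ∈ 𝒦, L.1 = upClosure (K.1 ∩ B)} := by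
  obtain ⟨K₀, hK₀⟩ := h𝒦.1
  constructor
  · exact ⟨elemL K₀ B hB (hmeet K₀ hK₀), K₀, hK₀, rfl⟩
  · intro U V hU hV ⟨L₁, ⟨K₁, hK₁, hL₁⟩, hL₁U⟩ ⟨L₂, ⟨K₂, hK₂, hL₂⟩, hL₂V⟩
    obtain ⟨S₁, ⟨U₁, hU₁, rfl⟩, hL₁S₁, hS₁U⟩ :=
      (boxBasis X).exists_subset_of_mem_open hL₁U hU
    obtain ⟨S₂, ⟨U₂, hU₂, rfl⟩, hL₂S₂, hS₂V⟩ :=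
      (boxBasis X).exists_subset_of_mem_open hL₂V hV
    -- K₁ ⊆ U₁ ∪ Bᶜ
    have key : ∀ (K : SmythPS X) (L : SmythPS X) (W : Set X), IsOpen W →
        L.1 = upClosure (K.1 ∩ B) → L ∈ boxU W → K.1 ⊆ W ∪ Bᶜ := by
      intro K L W hW hL hLW x hx
      by_cases hxB : x ∈ B
      · have : x ∈ L.1 := hL ▸ subset_upClosure' _ ⟨hx, hxB⟩
        exact Or.inl (hLW this)
      · exact Or.inr hxB
    have h₁ : K₁ ∈ boxU (U₁ ∪ Bᶜ) := key K₁ L₁ U₁ hU₁ hL₁ hL₁S₁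
    have h₂ : K₂ ∈ boxU (U₂ ∪ Bᶜ) := key K₂ L₂ U₂ hU₂ hL₂ hL₂S₂
    obtain ⟨K, hK𝒦, hKU, hKV⟩ := h𝒦.2 (boxU (U₁ ∪ Bᶜ)) (boxU (U₂ ∪ Bᶜ))
      (boxU_isOpen (hU₁.union hB.isOpen_compl)) (boxU_isOpen (hU₂.union hB.isOpen_compl))
      ⟨K₁, hK₁, h₁⟩ ⟨K₂, hK₂, h₂⟩
    refine ⟨elemL K B hB (hmeet K hK𝒦), ⟨K, hK𝒦, rfl⟩, ?_, ?_⟩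
    · apply hS₁U
      show upClosure (K.1 ∩ B) ⊆ U₁
      apply upClosure_subset_open' hU₁
      rintro x ⟨hxK, hxB⟩
      rcases hKU hxK with h | h
      · exact h
      · exact absurd hxB h
    · apply hS₂V
      show upClosure (K.1 ∩ B) ⊆ U₂
      apply upClosure_subset_open' hU₂
      rintro x ⟨hxK, hxB⟩
      rcases hKV hxK with h | h
      · exact h
      · exact absurd hxB h
end

section
/- A T₀ space X is QI₂-continuous if and only if for every x ∈ X there exists an irreducible subset ℱ of the Smyth power space P_S(X) such that ℱ ⊆ w(x) and ↑x = ⋂ℱ, where w(x) = {↑F : F nonempty finite and F ≪_{I₂} x}. -/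
open Set

section Aux

variable {X : Type} [TopologicalSpace X]

lemma specLE_refl (a : X) : specLE a a := subset_closure rfl

lemma specLE_trans {a b c : X} (h1 : specLE a b) (h2 : specLE b c) : specLE a c := by
  have : closure ({b} : Set X) ⊆ closure {c} := closure_minimal (by simpa [singleton_subset_iff]) isClosed_closure
  exact this h1

lemma mem_of_isOpen_specLE {U : Set X} (hU : IsOpen U) {a b : X} (ha : a ∈ U)
    (h : specLE a b) : b ∈ U := by
  rcases mem_closure_iff.1 h U hU ha with ⟨z, hzU, hzb⟩
  rw [mem_singleton_iff] at hzb
  exact hzb ▸ hzU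

lemma self_mem_upClosure {F : Set X} {a : X} (ha : a ∈ F) : a ∈ upClosure F :=
  ⟨a, ha, specLE_refl a⟩

lemma mem_upClosure_of_wayBelow {F : Set X} {x : X} (h : WayBelowI2 F {x}) :
    x ∈ upClosure F := by
  have hx : x ∈ cutD ({x} : Set X) := fun u hu => hu x rfl
  rcases h {x} isIrreducible_singleton ⟨x, hx, rfl⟩ with ⟨a, haF, hacl⟩
  exact ⟨a, haF, hacl⟩

lemma upClosure_singleton_subset {x : X} {K : SmythPS X} (hK : K ∈ wPS x) :
    upClosure ({x} : Set X) ⊆ K.1 := by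
  rcases hK with ⟨F, _, _, hwb, hKF⟩
  intro z hz
  rcases hz with ⟨x', hx', hxz⟩
  rcases mem_upClosure_of_wayBelow hwb with ⟨a, haF, hax⟩
  rw [hKF]
  rcases hx' with rfl
  exact ⟨a, haF, specLE_trans hax hxz⟩

lemma isOpen_boxU {U : Set X} (hU : IsOpen U) : IsOpen (boxU U) :=
  TopologicalSpace.isOpen_generateFrom_of_mem ⟨U, hU, rfl⟩

lemma gen_isOpen {S : Set (SmythPS X)}
    (h : TopologicalSpace.GenerateOpen {S : Set (SmythPS X) | ∃ U : Set X, IsOpen U ∧ S = boxU U} S) :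
    IsOpen S := h

/-- Key (topological Rudin) lemma: if `ℱ ⊆ wPS x` is irreducible with `⋂ℱ = ↑x`,
`K ∈ wPS x` and `U` is open with `K.1 ⊆ U`, then some member of `ℱ` lies inside `U`. -/
lemma key_rudin {x : X} {ℱ : Set (SmythPS X)} (hsub : ℱ ⊆ wPS x)
    (hirr : IsIrreducible ℱ) (hinter : upClosure {x} = ⋂ K ∈ ℱ, (K.1 : Set X))
    {F : Set X} (hwb : WayBelowI2 F {x})
    {U : Set X} (hU : IsOpen U) (hKU : upClosure F ⊆ U) :
    ∃ L ∈ ℱ, L.1 ⊆ U := by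
  by_contra hcon
  push_neg at hcon
  -- every L ∈ ℱ meets Uᶜ
  have hmeet : ∀ L ∈ ℱ, (Uᶜ ∩ L.1).Nonempty := by
    intro L hL
    rcases not_subset.1 (hcon L hL) with ⟨z, hzL, hzU⟩
    exact ⟨z, hzU, hzL⟩
  set 𝒞 : Set (Set X) := {A | IsClosed A ∧ A ⊆ Uᶜ ∧ ∀ L ∈ ℱ, (A ∩ L.1).Nonempty} with h𝒞
  have hUc : Uᶜ ∈ 𝒞 := ⟨hU.isClosed_compl, Subset.rfl, hmeet⟩
  -- Zorn
  obtain ⟨A, -, hA𝒞, hAmin⟩ :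
      ∃ m, m ⊆ Uᶜ ∧ Minimal (· ∈ 𝒞) m := by
    apply zorn_superset_nonempty
    · intro c hc hchain hcne
      refine ⟨⋂₀ c, ⟨?_, ?_, ?_⟩, fun s hs => sInter_subset_of_mem hs⟩
      · exact isClosed_sInter fun A hA => (hc hA).1
      · rcases hcne with ⟨A0, hA0⟩
        exact (sInter_subset_of_mem hA0).trans (hc hA0).2.1
      · intro L hL
        have key : (L.1 ∩ ⋂ i : c, (i : Set X)).Nonempty := by
          apply L.2.2.1.inter_iInter_nonempty
          · intro i; exact (hc i.2).1
          · intro u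
            rcases Finset.eq_empty_or_nonempty u with rfl | hu
            · simpa using L.2.1
            · obtain ⟨m, hmu, hmin⟩ := u.exists_minimal hu
              have hmle : ∀ i ∈ u, (m : Set X) ⊆ (i : Set X) := by
                intro i hi
                by_cases him : i = m
                · rw [him]
                rcases hchain.total m.2 i.2 with h | h
                · exact h
                · have hile : i ≤ m := h
                  exact hmin hi hile
              rcases (hc m.2).2.2 L hL with ⟨z, hzm, hzL⟩
              exact ⟨z, hzL, mem_iInter₂.2 fun i hi => hmle i hi hzm⟩
        rcases key with ⟨z, hzL, hz⟩
        exact ⟨z, fun A1 hA1 => mem_iInter.1 hz ⟨A1, hA1⟩, hzL⟩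
    · exact hUc
  obtain ⟨hAcl, hAUc, hAmeets⟩ := hA𝒞
  -- A is irreducible
  have hAne : A.Nonempty := by
    rcases hirr.1 with ⟨L, hL⟩
    rcases hAmeets L hL with ⟨z, hz, -⟩
    exact ⟨z, hz⟩
  have hAirr : IsIrreducible A := by
    refine ⟨hAne, fun V1 V2 hV1 hV2 h1 h2 => ?_⟩
    by_contra hempty
    rw [not_nonempty_iff_eq_empty] at hempty
    -- A \ V1 is a proper closed subset, hence not in 𝒞
    have hnot : ∀ V : Set X, IsOpen V → (A ∩ V).Nonempty →
        ∃ L ∈ ℱ, L.1 ∩ A ⊆ V := by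
      intro V hV hAV
      have hsub' : A \ V ⊆ A := diff_subset
      have hne : A \ V ≠ A := by
        intro h
        rcases hAV with ⟨z, hzA, hzV⟩
        rw [← h] at hzA
        exact hzA.2 hzV
      have hnotc : A \ V ∉ 𝒞 := fun hmem =>
        hne (le_antisymm hsub' (hAmin hmem hsub'))
      have hclosed : IsClosed (A \ V) := hAcl.sdiff hV
      have hsubc : A \ V ⊆ Uᶜ := hsub'.trans hAUc
      simp only [h𝒞, mem_setOf_eq, not_and] at hnotc
      rcases not_forall.1 (hnotc hclosed hsubc) with ⟨L, hL⟩
      rcases not_forall.1 hL with ⟨hLℱ, hLne⟩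
      rw [not_nonempty_iff_eq_empty] at hLne
      refine ⟨L, hLℱ, fun z hz => ?_⟩
      by_contra hzV
      have : z ∈ (A \ V) ∩ L.1 := ⟨⟨hz.2, hzV⟩, hz.1⟩
      rw [hLne] at this
      exact this
    rcases hnot V1 hV1 h1 with ⟨L1, hL1, hL1sub⟩
    rcases hnot V2 hV2 h2 with ⟨L2, hL2, hL2sub⟩
    have hB1 : (ℱ ∩ boxU (V1 ∪ Aᶜ)).Nonempty := by
      refine ⟨L1, hL1, fun z hz => ?_⟩
      by_cases hzA : z ∈ A
      · exact Or.inl (hL1sub ⟨hz, hzA⟩)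
      · exact Or.inr hzA
    have hB2 : (ℱ ∩ boxU (V2 ∪ Aᶜ)).Nonempty := by
      refine ⟨L2, hL2, fun z hz => ?_⟩
      by_cases hzA : z ∈ A
      · exact Or.inl (hL2sub ⟨hz, hzA⟩)
      · exact Or.inr hzA
    have := hirr.2 (boxU (V1 ∪ Aᶜ)) (boxU (V2 ∪ Aᶜ))
      (isOpen_boxU (hV1.union hAcl.isOpen_compl))
      (isOpen_boxU (hV2.union hAcl.isOpen_compl)) hB1 hB2
    rcases this with ⟨L, hLℱ, hL1', hL2'⟩
    rcases hAmeets L hLℱ with ⟨z, hzA, hzL⟩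
    rcases hL1' hzL with hzV1 | hzA'
    · rcases hL2' hzL with hzV2 | hzA'
      · have hz3 : z ∈ A ∩ (V1 ∩ V2) := ⟨hzA, hzV1, hzV2⟩
        rw [hempty] at hz3
        exact hz3
      · exact hzA' hzA
    · exact hzA' hzA
  -- x ∈ cutD A
  have hxcut : x ∈ cutD A := by
    intro u hu
    have hu' : u ∈ ⋂ K ∈ ℱ, (K.1 : Set X) := by
      refine mem_iInter₂.2 fun L hL => ?_
      rcases hAmeets L hL with ⟨z, hzA, hzL⟩
      exact L.2.2.2 z hzL u (hu z hzA)
    rw [← hinter] at hu'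
    rcases hu' with ⟨x', hx', hxu⟩
    rcases hx' with rfl
    exact hxu
  -- contradiction via WayBelowI2
  rcases hwb A hAirr ⟨x, hxcut, rfl⟩ with ⟨a, haF, hacl⟩
  have haA : a ∈ A := by rwa [hAcl.closure_eq] at hacl
  exact hAUc haA (hKU (self_mem_upClosure haF))

end Aux

theorem stmt18 {X : Type} [TopologicalSpace X] [T0Space X] :
    QI2Continuous X ↔
      ∀ x : X, ∃ ℱ : Set (SmythPS X), ℱ ⊆ wPS x ∧ IsIrreducible ℱ ∧
        upClosure {x} = ⋂ K ∈ ℱ, (K.1 : Set X) := by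
  constructor
  · intro h x
    exact ⟨wPS x, Subset.rfl, (h x).1, (h x).2⟩
  · intro h x
    rcases h x with ⟨ℱ, hsub, hirr, hinter⟩
    have hclosure : wPS x ⊆ closure ℱ := by
      intro K hK
      rcases hK with ⟨F, hFfin, hFne, hwb, hKF⟩
      rw [mem_closure_iff]
      intro 𝒪 h𝒪 hK𝒪
      -- induction over the generated topology
      have : ∀ 𝒪 : Set (SmythPS X),
          TopologicalSpace.GenerateOpen {S : Set (SmythPS X) | ∃ U : Set X, IsOpen U ∧ S = boxU U} 𝒪 →
          K ∈ 𝒪 → (𝒪 ∩ ℱ).Nonempty := by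
        intro 𝒪 hgen
        induction hgen with
        | basic S hS =>
          rcases hS with ⟨U, hU, rfl⟩
          intro hKU
          have hKU' : upClosure F ⊆ U := by rw [← hKF]; exact hKU
          rcases key_rudin hsub hirr hinter hwb hU hKU' with ⟨L, hLℱ, hLU⟩
          exact ⟨L, hLU, hLℱ⟩
        | univ =>
          intro _
          rcases hirr.1 with ⟨L, hL⟩
          exact ⟨L, trivial, hL⟩
        | inter S T hS hT ihS ihT =>
          intro hKST
          rcases ihS hKST.1 with ⟨L1, hL1S, hL1ℱ⟩
          rcases ihT hKST.2 with ⟨L2, hL2T, hL2ℱ⟩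
          have := hirr.2 S T (gen_isOpen hS) (gen_isOpen hT) ⟨L1, hL1ℱ, hL1S⟩ ⟨L2, hL2ℱ, hL2T⟩
          rcases this with ⟨L, hLℱ, hLS, hLT⟩
          exact ⟨L, ⟨hLS, hLT⟩, hLℱ⟩
        | sUnion 𝒮 h𝒮 ih =>
          intro hK
          rcases hK with ⟨S, hS𝒮, hKS⟩
          rcases ih S hS𝒮 hKS with ⟨L, hLS, hLℱ⟩
          exact ⟨L, ⟨S, hS𝒮, hLS⟩, hLℱ⟩
      exact this 𝒪 h𝒪 hK𝒪
    constructor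
    · -- wPS x is irreducible since ℱ ⊆ wPS x ⊆ closure ℱ
      refine ⟨hirr.1.mono hsub, fun V1 V2 hV1 hV2 h1 h2 => ?_⟩
      rcases h1 with ⟨K1, hK1w, hK1V⟩
      rcases h2 with ⟨K2, hK2w, hK2V⟩
      have h1' : (ℱ ∩ V1).Nonempty := by
        have := mem_closure_iff.1 (hclosure hK1w) V1 hV1 hK1V
        rcases this with ⟨L, hLV, hLℱ⟩
        exact ⟨L, hLℱ, hLV⟩
      have h2' : (ℱ ∩ V2).Nonempty := by
        have := mem_closure_iff.1 (hclosure hK2w) V2 hV2 hK2V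
        rcases this with ⟨L, hLV, hLℱ⟩
        exact ⟨L, hLℱ, hLV⟩
      rcases hirr.2 V1 V2 hV1 hV2 h1' h2' with ⟨L, hLℱ, hLV1, hLV2⟩
      exact ⟨L, hsub hLℱ, hLV1, hLV2⟩
    · apply Subset.antisymm
      · exact subset_iInter₂ fun K hK => upClosure_singleton_subset hK
      · rw [hinter]
        exact iInter₂_mono' fun K hK => ⟨K, hsub hK, Subset.rfl⟩
end
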